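/- (Separable states satisfy the CHSH bound) Let B = √2·(σ₁⊗σ₁ + σ₂⊗σ₂) be the Bell operator. If ρ is a separable 4×4 state, i.e. ρ = Σ_{n=1}^{N} p_n · ρ_A^{(n)} ⊗ ρ_B^{(n)} with p_n ≥ 0, Σ_n p_n = 1, and each ρ_A^{(n)}, ρ_B^{(n)} a positive-semidefinite 2×2 complex matrix of trace 1, then |Tr(B ρ)| ≤ 2. -/

import Mathlib

open Matrix
open scoped Kronecker ComplexOrder

/-- The four Pauli matrices (paper's convention, with `σ₃` the antisymmetric one). -/
noncomputable def pauli : Fin 4 → Matrix (Fin 2) (Fin 2) ℂ :=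
  ![!![1, 0; 0, 1], !![1, 0; 0, -1], !![0, 1; 1, 0], !![0, -Complex.I; Complex.I, 0]]

/-- The Bell operator `B = √2 (σ₁⊗σ₁ + σ₂⊗σ₂)`. -/
noncomputable def bellOperator : Matrix (Fin 2 × Fin 2) (Fin 2 × Fin 2) ℂ :=
  (Real.sqrt 2 : ℂ) • (pauli 1 ⊗ₖ pauli 1 + pauli 2 ⊗ₖ pauli 2)

/-- A two-qubit state is separable if it is a convex combination of product states. -/
def IsSepState (ρ : Matrix (Fin 2 × Fin 2) (Fin 2 × Fin 2) ℂ) : Prop :=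
  ∃ (N : ℕ) (p : Fin N → ℝ) (ρA ρB : Fin N → Matrix (Fin 2) (Fin 2) ℂ),
    (∀ n, 0 ≤ p n) ∧ (∑ n, p n = 1) ∧
    (∀ n, (ρA n).PosSemidef ∧ (ρA n).trace = 1) ∧
    (∀ n, (ρB n).PosSemidef ∧ (ρB n).trace = 1) ∧
    ρ = ∑ n, (p n : ℂ) • (ρA n ⊗ₖ ρB n)

lemma key (M : Matrix (Fin 2) (Fin 2) ℂ) (h : M.PosSemidef) (ht : M.trace = 1) :
    ∃ a b : ℝ, (pauli 1 * M).trace = (a : ℂ) ∧ (pauli 2 * M).trace = (b : ℂ) ∧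
      a ^ 2 + b ^ 2 ≤ 1 := by
  have hherm := h.1
  have h00 : star (M 0 0) = M 0 0 := hherm.apply 0 0
  have h11 : star (M 1 1) = M 1 1 := hherm.apply 1 1
  have h10 : star (M 0 1) = M 1 0 := hherm.apply 1 0
  set X := (M 0 0).re with hX
  set Y := (M 1 1).re with hY
  set r := (M 0 1).re with hr
  have hM00 : M 0 0 = (X : ℂ) := (Complex.conj_eq_iff_re.mp h00).symm
  have hM11 : M 1 1 = (Y : ℂ) := (Complex.conj_eq_iff_re.mp h11).symm
  have hXY : X + Y = 1 := by
    have h2 := congrArg Complex.re ht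
    simp [Matrix.trace, Matrix.diag, Fin.sum_univ_succ, hM00, hM11] at h2
    exact_mod_cast h2
  have hquad : ∀ t : ℝ, 0 ≤ X * (t * t) + (2 * r) * t + Y := by
    intro t
    have h2 := (Complex.le_def.mp (h.dotProduct_mulVec_nonneg ![(t : ℂ), 1])).1
    have h10' : (M 1 0).re = r := by rw [← h10]; simp [hr]
    simp [dotProduct, Matrix.mulVec, Fin.sum_univ_succ, Complex.add_re,
      Complex.mul_re, hM00, hM11] at h2
    rw [h10'] at h2
    nlinarith [h2]
  have hdisc : r ^ 2 ≤ X * Y := by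
    have hd := discrim_le_zero hquad
    rw [discrim] at hd
    nlinarith [hd]
  refine ⟨X - Y, 2 * r, ?_, ?_, by nlinarith⟩
  · simp [pauli, Matrix.trace, Matrix.diag, Matrix.mul_apply, Fin.sum_univ_succ, hM00, hM11]
    push_cast
    ring
  · have hadd : M 1 0 + M 0 1 = ((2 * r : ℝ) : ℂ) := by
      rw [← h10, RCLike.star_def, add_comm, Complex.add_conj]
    simp [pauli, Matrix.trace, Matrix.diag, Matrix.mul_apply, Fin.sum_univ_succ]
    rw [hadd]; push_cast; ring

/-- Separable two-qubit states satisfy the CHSH bound `|Tr(Bρ)| ≤ 2`. -/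
theorem separable_satisfies_chsh (ρ : Matrix (Fin 2 × Fin 2) (Fin 2 × Fin 2) ℂ)
    (hρ : IsSepState ρ) : ‖(bellOperator * ρ).trace‖ ≤ 2 := by
  obtain ⟨N, p, ρA, ρB, hp, hpsum, hA, hB, hρeq⟩ := hρ
  choose a b ha hb hab using fun n => key (ρA n) (hA n).1 (hA n).2
  choose c d hc hd hcd using fun n => key (ρB n) (hB n).1 (hB n).2
  have htr : (bellOperator * ρ).trace
      = ((Real.sqrt 2 * ∑ n, p n * (a n * c n + b n * d n) : ℝ) : ℂ) := by
    rw [hρeq, Matrix.mul_sum, trace_sum]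
    simp only [bellOperator, Matrix.mul_smul, Matrix.smul_mul, Matrix.add_mul,
      mul_kronecker_mul, trace_smul, trace_add, trace_kronecker, ha, hb, hc, hd,
      smul_eq_mul]
    push_cast [Finset.mul_sum]
    refine Finset.sum_congr rfl fun n _ => ?_
    rw [← Matrix.mul_kronecker_mul, ← Matrix.mul_kronecker_mul, Matrix.trace_kronecker,
      Matrix.trace_kronecker, ha, hb, hc, hd]
    push_cast; ring
  rw [htr, Complex.norm_real, Real.norm_eq_abs, abs_mul]
  have hs2 : (0:ℝ) ≤ Real.sqrt 2 := Real.sqrt_nonneg 2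
  have hS : |∑ n, p n * (a n * c n + b n * d n)| ≤ 1 := by
    calc |∑ n, p n * (a n * c n + b n * d n)|
        ≤ ∑ n, |p n * (a n * c n + b n * d n)| := Finset.abs_sum_le_sum_abs _ _
      _ ≤ ∑ n, p n := by
          refine Finset.sum_le_sum fun n _ => ?_
          rw [abs_mul, abs_of_nonneg (hp n)]
          have h1 : |a n * c n + b n * d n| ≤ 1 := by
            rw [abs_le]
            constructor <;>
              nlinarith [hab n, hcd n, sq_nonneg (a n * d n - b n * c n),
                sq_nonneg (a n * c n + b n * d n + 1), sq_nonneg (a n * c n + b n * d n - 1)]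
          nlinarith [hp n, abs_nonneg (a n * c n + b n * d n)]
      _ = 1 := hpsum
  have h2 : |Real.sqrt 2| = Real.sqrt 2 := abs_of_nonneg hs2
  have h3 : Real.sqrt 2 ≤ 2 := by
    nlinarith [Real.sq_sqrt (by norm_num : (0:ℝ) ≤ 2), hs2]
  calc |Real.sqrt 2| * |∑ n, p n * (a n * c n + b n * d n)|
      ≤ Real.sqrt 2 * 1 := by rw [h2]; exact mul_le_mul_of_nonneg_left hS hs2
    _ ≤ 2 := by linarith
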